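/- arXiv:2208.03606 — 3 statements merged into one kernel-verified Lean document; each statement's English description precedes it below -/
import Mathlib

section
/- If L is a finite semimodular lattice and α is a congruence of L, then the quotient lattice L/α is semimodular. -/
/-- A lattice is (upper) semimodular: `a ⋖ b` and `a ≤ c` imply `a ⊔ c ⪯ b ⊔ c`. -/
def IsSemimodular (L : Type*) [Lattice L] : Prop :=
  ∀ a b c : L, a ⋖ b → a ≤ c → (a ⊔ c = b ⊔ c ∨ (a ⊔ c) ⋖ (b ⊔ c))

/-- Covers map to covers or collapse under a surjective lattice hom. -/
lemma covby_map_of_surjective {L M : Type*} [Lattice L] [Lattice M]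
    (f : LatticeHom L M) (hf : Function.Surjective f) {u v : L} (h : u ⋖ v) :
    f u = f v ∨ f u ⋖ f v := by
  by_cases heq : f u = f v
  · exact Or.inl heq
  · right
    have hlt : f u < f v := lt_of_le_of_ne (OrderHomClass.mono f h.le) heq
    refine ⟨hlt, fun m hm1 hm2 => ?_⟩
    obtain ⟨z, rfl⟩ := hf m
    have key : u ⊔ (z ⊓ v) = u ∨ u ⊔ (z ⊓ v) = v := by
      by_cases h1 : u ⊔ (z ⊓ v) = u
      · exact Or.inl h1
      · have hle : u ⊔ (z ⊓ v) ≤ v := sup_le h.le inf_le_right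
        have hlt : u < u ⊔ (z ⊓ v) := lt_of_le_of_ne le_sup_left (Ne.symm h1)
        exact Or.inr ((lt_or_eq_of_le hle).resolve_left (h.2 hlt))
    have hfz : f (u ⊔ (z ⊓ v)) = f z := by
      rw [map_sup, map_inf]
      rw [inf_eq_left.mpr hm2.le, sup_eq_right.mpr hm1.le]
    rcases key with hk | hk
    · rw [hk] at hfz; exact hm1.ne hfz
    · rw [hk] at hfz; exact hm2.ne hfz.symm
/-- If `L` is a finite semimodular lattice and `α` is a congruence of `L` (encoded as the
kernel of the surjective lattice homomorphism `f`), then the quotient lattice `L/α`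
(encoded as the image `M`) is semimodular. -/
theorem quotient_semimodular_of_finite_semimodular
    {L M : Type*} [Lattice L] [Fintype L] [Lattice M]
    (f : LatticeHom L M) (hf : Function.Surjective f)
    (hL : IsSemimodular L) : IsSemimodular M := by
  intro a b c hab hac
  obtain ⟨x, rfl⟩ := hf a
  obtain ⟨y0, hy0⟩ := hf b
  obtain ⟨w, rfl⟩ := hf c
  set y := x ⊔ y0 with hy
  have hfy : f y = b := by rw [hy, map_sup, hy0, sup_eq_right.mpr hab.le]
  have hxy : x < y := by
    refine lt_of_le_of_ne le_sup_left fun h => ?_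
    rw [← h] at hfy
    exact hab.ne hfy
  -- maximal element of S = {z | x ≤ z ∧ z ≤ y ∧ f z = f x}
  have hSfin : ({z : L | x ≤ z ∧ z ≤ y ∧ f z = f x}).Finite := Set.toFinite _
  obtain ⟨z, hzS, hzmax⟩ : ∃ z ∈ {z : L | x ≤ z ∧ z ≤ y ∧ f z = f x},
      ∀ z' ∈ {z : L | x ≤ z ∧ z ≤ y ∧ f z = f x}, z ≤ z' → z = z' := by
    obtain ⟨z, hzS, hzmax⟩ := hSfin.exists_maximalFor id _ ⟨x, le_rfl, hxy.le, rfl⟩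
    exact ⟨z, hzS, fun z' hz' h => le_antisymm h (hzmax hz' h)⟩
  obtain ⟨hxz, hzy, hfz⟩ := hzS
  have hzlty : z < y := lt_of_le_of_ne hzy fun h => hab.ne (by rw [← hfz, h, hfy])
  have : IsStronglyAtomic L := IsStronglyAtomic.of_wellFounded_lt IsWellFounded.wf
  obtain ⟨z', hzz', hz'y⟩ := exists_covBy_le_of_lt hzlty
  have hfz' : f z' = b := by
    have h1 : f x ≤ f z' := hfz ▸ OrderHomClass.mono f hzz'.le
    have h2 : f z' ≤ b := hfy ▸ OrderHomClass.mono f hz'y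
    rcases eq_or_lt_of_le h1 with h | h
    · exfalso
      have : z' ∈ {z : L | x ≤ z ∧ z ≤ y ∧ f z = f x} := ⟨hxz.trans hzz'.le, hz'y, h.symm⟩
      have := hzmax z' this hzz'.le
      exact hzz'.ne this
    · rcases eq_or_lt_of_le h2 with h' | h'
      · exact h'
      · exact absurd h' (hab.2 h).elim
  set w' := z ⊔ w with hw'
  have hfw' : f w' = f w := by rw [hw', map_sup, hfz, sup_eq_right.mpr hac]
  have e2 : b ⊔ f w = f (z' ⊔ w') := by rw [map_sup, hfz', hfw']
  have e1 : f x ⊔ f w = f w' := by rw [hfw', sup_eq_right.mpr hac]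
  rcases hL z z' w' hzz' le_sup_left with heq | hcov
  · left
    calc f x ⊔ f w = f (z ⊔ w') := by rw [map_sup, hfz, hfw']
      _ = f (z' ⊔ w') := by rw [heq]
      _ = b ⊔ f w := e2.symm
  · have hzw' : z ⊔ w' = w' := sup_eq_right.mpr le_sup_left
    rw [hzw'] at hcov
    rcases covby_map_of_surjective f hf hcov with heq | hcov'
    · left; rw [e1, e2, heq]
    · right; rw [e1, e2]; exact hcov'
end

section
/- Every congruence of a finite semimodular lattice is cover-preserving: if α is a congruence of a finite semimodular lattice L and a ⋖ b in L, then in the quotient L/α either a/α = b/α or a/α ⋖ b/α. -/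
/-- Every congruence of a finite semimodular lattice is cover-preserving: if `a ⋖ b` in
`L`, then in the quotient (encoded by the surjective lattice homomorphism `f`) either
`a/α = b/α` or `a/α ⋖ b/α`. -/
theorem congruence_cover_preserving
    {L M : Type*} [Lattice L] [Fintype L] [Lattice M]
    (hL : IsSemimodular L)
    (f : LatticeHom L M) (hf : Function.Surjective f)
    {a b : L} (hab : a ⋖ b) :
    f a = f b ∨ f a ⋖ f b := by
  by_cases h : f a = f b
  · exact Or.inl h
  right
  have hfab : f a ≤ f b := OrderHomClass.mono f hab.le
  have hlt : f a < f b := lt_of_le_of_ne hfab h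
  refine ⟨hlt, fun m hm1 hm2 => ?_⟩
  obtain ⟨c, rfl⟩ := hf m
  set d := (a ⊔ c) ⊓ b with hd
  have hfd : f d = f c := by
    rw [hd, map_inf, map_sup]
    rw [sup_of_le_right hm1.le, inf_of_le_left hm2.le]
  have had : a ≤ d := le_inf (le_sup_left) hab.le
  have hdb : d ≤ b := inf_le_right
  rcases hab.eq_or_eq had hdb with h1 | h1
  · exact absurd ((h1 ▸ hfd) : f a = f c) hm1.ne
  · exact absurd ((h1 ▸ hfd) : f b = f c).symm hm2.ne
end

section
/- Let L be a finite semimodular lattice with chains C and C' such that every nonzero join-irreducible element of L lies in C ∪ C' and c ∧ c' = 0 for all c ∈ C, c' ∈ C'. If α is a congruence of L such that L/α is not a chain, then L/α also admits chains D and D' with Ji(L/α) ⊆ D ∪ D' and d ∧ d' = 0 (the bottom of L/α) for all d ∈ D, d' ∈ D'. -/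
/-- Let `L` be a finite semimodular lattice with chains `C`, `C'` such that every nonzero
join-irreducible element of `L` lies in `C ∪ C'` and `c ⊓ c' = ⊥` for all `c ∈ C`,
`c' ∈ C'`.  If `α` is a congruence of `L` (encoded as the kernel of the surjective
lattice homomorphism `f`) such that `L/α` (encoded as `M`) is not a chain, then `M`
also admits chains `D`, `D'` with `SupIrred ⊆ D ∪ D'` and `d ⊓ d' = ⊥` for all
`d ∈ D`, `d' ∈ D'`. -/
theorem quotient_slim_rectangular
    {L M : Type*} [Lattice L] [Fintype L] [OrderBot L] [Lattice M] [OrderBot M]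
    (hL : IsSemimodular L)
    (C C' : Set L) (hC : IsChain (· ≤ ·) C) (hC' : IsChain (· ≤ ·) C')
    (hJi : {a : L | SupIrred a} ⊆ C ∪ C')
    (hmeet : ∀ c ∈ C, ∀ c' ∈ C', c ⊓ c' = ⊥)
    (f : LatticeHom L M) (hf : Function.Surjective f)
    (hnotchain : ¬ ∀ x y : M, x ≤ y ∨ y ≤ x) :
    ∃ D D' : Set M, IsChain (· ≤ ·) D ∧ IsChain (· ≤ ·) D' ∧
      {a : M | SupIrred a} ⊆ D ∪ D' ∧
      ∀ d ∈ D, ∀ d' ∈ D', d ⊓ d' = ⊥ := by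
  have hmono : Monotone f := OrderHomClass.mono f
  have hbot : f ⊥ = (⊥ : M) := by
    refine le_antisymm ?_ bot_le
    obtain ⟨x, hx⟩ := hf ⊥
    exact hx ▸ hmono bot_le
  have key : ∀ a : L, SupIrred (f a) → ∃ j : L, SupIrred j ∧ f j = f a := by
    intro a
    induction a using WellFoundedLT.induction with
    | _ a ih =>
      intro hfa
      by_cases hja : SupIrred a
      · exact ⟨a, hja, rfl⟩
      · rw [SupIrred] at hja
        push_neg at hja
        by_cases hmin : IsMin a
        · exact absurd (show f a = ⊥ by rw [hmin.eq_bot, hbot]) (by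
            intro h; exact hfa.1 (h ▸ isMin_bot))
        · obtain ⟨b, c, hbc, hb, hc⟩ := hja hmin
          have hb' : b < a := lt_of_le_of_ne (le_sup_left.trans_eq hbc) hb
          have hc' : c < a := lt_of_le_of_ne (le_sup_right.trans_eq hbc) hc
          have hsum : f b ⊔ f c = f a := by rw [← map_sup, hbc]
          rcases hfa.2 hsum with h | h
          · obtain ⟨j, hj, hjf⟩ := ih b hb' (h ▸ hfa)
            exact ⟨j, hj, hjf.trans h⟩
          · obtain ⟨j, hj, hjf⟩ := ih c hc' (h ▸ hfa)
            exact ⟨j, hj, hjf.trans h⟩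
  refine ⟨f '' C, f '' C', hC.image_of_map_rel _ _ _ (fun _ _ h => hmono h),
    hC'.image_of_map_rel _ _ _ (fun _ _ h => hmono h), ?_, ?_⟩
  · intro m hm
    obtain ⟨a, rfl⟩ := hf m
    obtain ⟨j, hj, hjf⟩ := key a hm
    rcases hJi hj with h | h
    · exact Or.inl ⟨j, h, hjf⟩
    · exact Or.inr ⟨j, h, hjf⟩
  · rintro d ⟨c, hc, rfl⟩ d' ⟨c', hc', rfl⟩
    rw [← map_inf, hmeet c hc c' hc', hbot]
end
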